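/- Under the hypotheses of the previous statement (basic estimate ‖f‖² ≤ C(‖Sf‖² + ‖T*f‖²) on dom S ∩ dom T*), the range of T is closed and equals ker S. -/

import Mathlib

/-- Under the basic estimate `‖f‖² ≤ C(‖Sf‖² + ‖T*f‖²)` on `dom S ∩ dom T*`, for
densely defined closed operators `T : H₁ → H₂`, `S : H₂ → H₃` with `S ∘ T = 0`,
the range of `T` is closed and equals `ker S`. -/
theorem stmt_11 {H₁ H₂ H₃ : Type*}
    [NormedAddCommGroup H₁] [InnerProductSpace ℂ H₁] [CompleteSpace H₁]
    [NormedAddCommGroup H₂] [InnerProductSpace ℂ H₂] [CompleteSpace H₂]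
    [NormedAddCommGroup H₃] [InnerProductSpace ℂ H₃] [CompleteSpace H₃]
    (T : H₁ →ₗ.[ℂ] H₂) (S : H₂ →ₗ.[ℂ] H₃)
    (hTdense : Dense (T.domain : Set H₁)) (hSdense : Dense (S.domain : Set H₂))
    (hTclosed : IsClosed (T.graph : Set (H₁ × H₂)))
    (hSclosed : IsClosed (S.graph : Set (H₂ × H₃)))
    (hST : ∀ x : T.domain, ∃ h : T x ∈ S.domain, S ⟨T x, h⟩ = 0)
    (C : ℝ) (hC : 0 < C)
    (hbasic : ∀ f : H₂, ∀ hfS : f ∈ S.domain, ∀ hfT : f ∈ T.adjoint.domain,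
      ‖f‖ ^ 2 ≤ C * (‖S ⟨f, hfS⟩‖ ^ 2 + ‖T.adjoint ⟨f, hfT⟩‖ ^ 2)) :
    IsClosed ((LinearMap.range T.toFun : Submodule ℂ H₂) : Set H₂) ∧
    (LinearMap.range T.toFun : Submodule ℂ H₂) =
      {f : H₂ | ∃ hf : f ∈ S.domain, S ⟨f, hf⟩ = 0} := by
  classical
  -- the kernel of S as a submodule
  set K : Submodule ℂ H₂ := (LinearMap.ker S.toFun).map S.domain.subtype with hKdef
  have hmemK : ∀ f : H₂, f ∈ K ↔ ∃ hf : f ∈ S.domain, S ⟨f, hf⟩ = 0 := by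
    intro f
    constructor
    · rintro ⟨⟨y, hy⟩, h0, rfl⟩
      exact ⟨hy, h0⟩
    · rintro ⟨hf, h0⟩
      exact ⟨⟨f, hf⟩, h0, rfl⟩
  have hKclosed : IsClosed (K : Set H₂) := by
    have hset : (K : Set H₂) = (fun f : H₂ => ((f, (0 : H₃)) : H₂ × H₃)) ⁻¹'
        (S.graph : Set (H₂ × H₃)) := by
      ext f
      simp only [Set.mem_preimage, SetLike.mem_coe, LinearPMap.mem_graph_iff, hmemK]
      constructor
      · rintro ⟨hf, h0⟩
        exact ⟨⟨f, hf⟩, rfl, h0⟩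
      · rintro ⟨⟨y, hy⟩, h1, h2⟩
        dsimp at h1
        subst h1
        exact ⟨hy, h2⟩
    rw [hset]
    exact hSclosed.preimage (Continuous.prodMk continuous_id continuous_const)
  haveI : CompleteSpace K := hKclosed.completeSpace_coe
  -- range T ⊆ K
  have hrange_le : LinearMap.range T.toFun ≤ K := by
    rintro f ⟨x, rfl⟩
    obtain ⟨h, h0⟩ := hST x
    exact (hmemK _).2 ⟨h, h0⟩
  -- the key estimate: for f ∈ K and g ∈ dom T†, |⟪f, g⟫| ≤ √C ‖f‖ ‖T† g‖
  have key : ∀ (f : H₂), f ∈ K → ∀ (g : T.adjoint.domain),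
      ‖(inner ℂ f (g : H₂) : ℂ)‖ ≤ Real.sqrt C * ‖f‖ * ‖T.adjoint g‖ := by
    intro f hf g
    set Pg : H₂ := (K.orthogonalProjectionOnto (g : H₂) : H₂) with hPgdef
    have hPgK : Pg ∈ K := (K.orthogonalProjectionOnto (g : H₂)).2
    have hg' : (g : H₂) - Pg ∈ Kᗮ := Submodule.sub_starProjection_mem_orthogonal (K := K) g
    have hinner_zero : ∀ v : T.domain, (inner ℂ ((g : H₂) - Pg) (T v) : ℂ) = 0 := by
      intro v
      have hTv : (T v : H₂) ∈ K := hrange_le ⟨v, rfl⟩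
      exact inner_eq_zero_symm.mp ((Submodule.mem_orthogonal K _).1 hg' _ hTv)
    have hsub_mem : (g : H₂) - Pg ∈ T.adjoint.domain := by
      apply LinearPMap.mem_adjoint_domain_of_exists
      exact ⟨0, fun v => by rw [inner_zero_left, hinner_zero v]⟩
    have hsub_zero : T.adjoint ⟨(g : H₂) - Pg, hsub_mem⟩ = 0 := by
      apply LinearPMap.adjoint_apply_eq hTdense
      intro v
      rw [inner_zero_left, hinner_zero v]
    have hPg_mem : Pg ∈ T.adjoint.domain := by
      have : Pg = (g : H₂) - ((g : H₂) - Pg) := by abel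
      rw [this]
      exact sub_mem g.2 hsub_mem
    have hTPg : T.adjoint ⟨Pg, hPg_mem⟩ = T.adjoint g := by
      have heq : (⟨Pg, hPg_mem⟩ : T.adjoint.domain)
          = g - ⟨(g : H₂) - Pg, hsub_mem⟩ := by
        apply Subtype.ext
        simp
      rw [heq, T.adjoint.map_sub, hsub_zero, sub_zero]
    obtain ⟨hPgS, hPgS0⟩ := (hmemK Pg).1 hPgK
    have hest : ‖Pg‖ ^ 2 ≤ C * ‖T.adjoint g‖ ^ 2 := by
      have := hbasic Pg hPgS hPg_mem
      rw [hPgS0, hTPg] at this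
      simpa using this
    have hPg_norm : ‖Pg‖ ≤ Real.sqrt C * ‖T.adjoint g‖ := by
      have h1 : ‖Pg‖ = Real.sqrt (‖Pg‖ ^ 2) := by
        rw [Real.sqrt_sq (norm_nonneg _)]
      rw [h1]
      have h2 : Real.sqrt (‖Pg‖ ^ 2) ≤ Real.sqrt (C * ‖T.adjoint g‖ ^ 2) :=
        Real.sqrt_le_sqrt hest
      calc Real.sqrt (‖Pg‖ ^ 2) ≤ Real.sqrt (C * ‖T.adjoint g‖ ^ 2) := h2
        _ = Real.sqrt C * ‖T.adjoint g‖ := by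
            rw [Real.sqrt_mul hC.le, Real.sqrt_sq (norm_nonneg _)]
    have hfg : (inner ℂ f (g : H₂) : ℂ) = inner ℂ f Pg := by
      have h0 : (inner ℂ f ((g : H₂) - Pg) : ℂ) = 0 :=
        (Submodule.mem_orthogonal K _).1 hg' f hf
      rw [inner_sub_right] at h0
      have := sub_eq_zero.mp h0
      exact this
    rw [hfg]
    calc ‖(inner ℂ f Pg : ℂ)‖ ≤ ‖f‖ * ‖Pg‖ := norm_inner_le_norm f Pg
      _ ≤ ‖f‖ * (Real.sqrt C * ‖T.adjoint g‖) :=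
          mul_le_mul_of_nonneg_left hPg_norm (norm_nonneg f)
      _ = Real.sqrt C * ‖f‖ * ‖T.adjoint g‖ := by ring
  -- the hard inclusion: K ≤ range T
  have hK_le : ∀ f : H₂, f ∈ K → f ∈ LinearMap.range T.toFun := by
    intro f hf
    -- the functional ψ g = ⟪f, g⟫ on dom T†
    set ψ : T.adjoint.domain →ₗ[ℂ] ℂ :=
      ((innerSL ℂ f).toLinearMap).comp (T.adjoint.domain.subtype) with hψdef
    have hψ_apply : ∀ g : T.adjoint.domain, ψ g = inner ℂ f (g : H₂) := fun g => rfl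
    have hker : LinearMap.ker T.adjoint.toFun ≤ LinearMap.ker ψ := by
      intro g hg
      rw [LinearMap.mem_ker] at hg ⊢
      rw [hψ_apply]
      have h0 : ‖(inner ℂ f (g : H₂) : ℂ)‖ ≤ 0 := by
        have := key f hf g
        rwa [show T.adjoint g = T.adjoint.toFun g from rfl, hg, norm_zero, mul_zero] at this
      exact norm_le_zero_iff.mp h0
    -- factor through the range of T†
    set R : Submodule ℂ H₁ := LinearMap.range T.adjoint.toFun with hRdef
    set e₁ := LinearMap.quotKerEquivRange T.adjoint.toFun with he₁def
    set φ₀ : R →ₗ[ℂ] ℂ :=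
      ((LinearMap.ker T.adjoint.toFun).liftQ ψ hker).comp e₁.symm.toLinearMap with hφ₀def
    have hφ₀_apply : ∀ g : T.adjoint.domain,
        φ₀ ⟨T.adjoint g, LinearMap.mem_range_self _ g⟩ = inner ℂ f (g : H₂) := by
      intro g
      have hsymm : e₁.symm ⟨T.adjoint g, LinearMap.mem_range_self _ g⟩
          = Submodule.Quotient.mk g := by
        rw [LinearEquiv.symm_apply_eq]
        apply Subtype.ext
        simp [he₁def]
      simp only [hφ₀def, LinearMap.comp_apply, LinearEquiv.coe_toLinearMap, hsymm]
      rw [Submodule.liftQ_apply, hψ_apply]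
    have hφ₀_bound : ∀ x : R, ‖φ₀ x‖ ≤ (Real.sqrt C * ‖f‖) * ‖x‖ := by
      rintro ⟨x, hx⟩
      obtain ⟨g, hg⟩ := hx
      have hxeq : (⟨x, ⟨g, hg⟩⟩ : R) = ⟨T.adjoint g, LinearMap.mem_range_self _ g⟩ := by
        apply Subtype.ext
        exact hg.symm
      rw [hxeq, hφ₀_apply]
      have := key f hf g
      calc ‖(inner ℂ f (g : H₂) : ℂ)‖ ≤ Real.sqrt C * ‖f‖ * ‖T.adjoint g‖ := this
        _ = (Real.sqrt C * ‖f‖) * ‖(⟨T.adjoint g, LinearMap.mem_range_self _ g⟩ : R)‖ := by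
            simp [mul_assoc, Submodule.coe_norm]
    set Φ₀ : R →L[ℂ] ℂ := φ₀.mkContinuous (Real.sqrt C * ‖f‖) hφ₀_bound with hΦ₀def
    obtain ⟨Φ, hΦ, -⟩ := exists_extension_norm_eq R Φ₀
    set u : H₁ := (InnerProductSpace.toDual ℂ H₁).symm Φ with hudef
    have hu : ∀ g : T.adjoint.domain, (inner ℂ u (T.adjoint g) : ℂ) = inner ℂ f (g : H₂) := by
      intro g
      have h1 : (inner ℂ u (T.adjoint g) : ℂ) = Φ (T.adjoint g) :=
        InnerProductSpace.toDual_symm_apply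
      rw [h1, hΦ ⟨T.adjoint g, LinearMap.mem_range_self _ g⟩]
      show Φ₀ _ = _
      rw [hΦ₀def]
      exact hφ₀_apply g
    -- the rotated graph of T in H₂ × H₁
    set e : (H₁ × H₂) →ₗ[ℂ] (H₂ × H₁) :=
      LinearMap.prod (LinearMap.snd ℂ H₁ H₂) (-(LinearMap.fst ℂ H₁ H₂)) with hedef
    set G2 : Submodule ℂ (H₂ × H₁) := T.graph.map e with hG2def
    have hG2closed : IsClosed (G2 : Set (H₂ × H₁)) := by
      have hset : (G2 : Set (H₂ × H₁)) =
          (fun z : H₂ × H₁ => ((-z.2, z.1) : H₁ × H₂)) ⁻¹' (T.graph : Set (H₁ × H₂)) := by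
        ext z
        simp only [Set.mem_preimage, SetLike.mem_coe, hG2def, Submodule.mem_map]
        constructor
        · rintro ⟨w, hw, rfl⟩
          simpa [hedef] using hw
        · intro hz
          exact ⟨(-z.2, z.1), hz, by simp [hedef]⟩
      rw [hset]
      exact hTclosed.preimage ((continuous_snd.neg).prodMk continuous_fst)
    -- move to the L2 product to use orthogonality
    set W : Submodule ℂ (WithLp 2 (H₂ × H₁)) :=
      G2.comap (WithLp.linearEquiv 2 ℂ (H₂ × H₁)).toLinearMap with hWdef
    have hWmem : ∀ z : WithLp 2 (H₂ × H₁),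
        z ∈ W ↔ WithLp.equiv 2 (H₂ × H₁) z ∈ G2 := fun z => Iff.rfl
    have hWclosed : IsClosed (W : Set (WithLp 2 (H₂ × H₁))) := by
      have hset : (W : Set (WithLp 2 (H₂ × H₁))) =
          (WithLp.prodContinuousLinearEquiv 2 ℂ H₂ H₁) ⁻¹' (G2 : Set (H₂ × H₁)) := rfl
      rw [hset]
      exact hG2closed.preimage (WithLp.prodContinuousLinearEquiv 2 ℂ H₂ H₁).continuous
    haveI : CompleteSpace W := hWclosed.completeSpace_coe
    set z₀ : WithLp 2 (H₂ × H₁) := (WithLp.equiv 2 (H₂ × H₁)).symm (f, -u) with hz₀def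
    have hz₀ : z₀ ∈ Wᗮᗮ := by
      rw [Submodule.mem_orthogonal]
      intro w hw
      -- w.fst is in the adjoint domain with T† w.fst = w.snd
      have hw_pair : ∀ v : T.domain,
          (inner ℂ ((T v : H₂)) w.fst : ℂ) = inner ℂ (v : H₁) w.snd := by
        intro v
        have hpv : (WithLp.equiv 2 (H₂ × H₁)).symm ((T v : H₂), -(v : H₁)) ∈ W := by
          rw [hWmem]
          simp only [Equiv.apply_symm_apply]
          exact ⟨((v : H₁), T v), T.mem_graph v, by simp [hedef]⟩
        have h0 := (Submodule.mem_orthogonal W w).1 hw _ hpv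
        rw [WithLp.prod_inner_apply] at h0
        simp only [WithLp.equiv_symm_apply, WithLp.ofLp_toLp, WithLp.ofLp_fst, WithLp.ofLp_snd, inner_neg_left] at h0
        linear_combination h0
      have hy_adj : w.fst ∈ T.adjoint.domain := by
        apply LinearPMap.mem_adjoint_domain_of_exists
        refine ⟨w.snd, fun v => ?_⟩
        have := congrArg (starRingEnd ℂ) (hw_pair v)
        simpa [inner_conj_symm] using this.symm
      have hTadj_eq : T.adjoint ⟨w.fst, hy_adj⟩ = w.snd := by
        apply LinearPMap.adjoint_apply_eq hTdense
        intro v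
        have := congrArg (starRingEnd ℂ) (hw_pair v)
        simpa [inner_conj_symm] using this.symm
      -- now compute ⟪w, z₀⟫
      rw [WithLp.prod_inner_apply]
      simp only [hz₀def, WithLp.equiv_symm_apply, WithLp.ofLp_toLp, WithLp.ofLp_fst, WithLp.ofLp_snd, inner_neg_right]
      have h1 : (inner ℂ u (T.adjoint ⟨w.fst, hy_adj⟩) : ℂ) = inner ℂ f w.fst :=
        hu ⟨w.fst, hy_adj⟩
      rw [hTadj_eq] at h1
      have h2 : (inner ℂ w.snd u : ℂ) = inner ℂ w.fst f := by
        have := congrArg (starRingEnd ℂ) h1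
        simpa [inner_conj_symm] using this
      rw [h2]
      ring
    rw [Submodule.orthogonal_orthogonal] at hz₀
    rw [hWmem] at hz₀
    obtain ⟨p, hp, hpe⟩ := hz₀
    obtain ⟨v, hv1, hv2⟩ := T.mem_graph_iff.1 hp
    have hfst : (WithLp.equiv 2 (H₂ × H₁) z₀).1 = f := by
      rw [hz₀def]; simp
    have hp2 : p.2 = f := by
      have : (e p).1 = f := by rw [hpe, hfst]
      simpa [hedef] using this
    exact ⟨v, by rw [show T.toFun v = T v from rfl, hv2, hp2]⟩
  -- assemble
  have hmain : (LinearMap.range T.toFun : Submodule ℂ H₂) = K :=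
    le_antisymm hrange_le hK_le
  constructor
  · rw [hmain]
    exact hKclosed
  · rw [hmain]
    ext g
    exact hmemK g
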